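/- arXiv:2407.11094 — 2 statements merged into one kernel-verified Lean document; each statement's English description precedes it below -/
import Mathlib

section
/- Let M_∞, M_1 ⊂ R^d be disjoint convex sets, V a symmetric positive-definite d×d matrix, and G_θ = N(θ, V). Let G_∞ (resp. G_1) be the convex hull of {G_θ : θ ∈ M_∞} (resp. {G_θ : θ ∈ M_1}), viewed as sets of probability densities. Then G_∞ and G_1 are disjoint. -/
open MeasureTheory Real
open scoped RealInnerProductSpace

/-- Density of the Gaussian `N(μ, V)` on `ℝ^d`, where `V` is the covariance operator. -/
noncomputable def gaussDensity {d : ℕ}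
    (V : EuclideanSpace ℝ (Fin d) ≃L[ℝ] EuclideanSpace ℝ (Fin d))
    (μ x : EuclideanSpace ℝ (Fin d)) : ℝ :=
  (Real.sqrt ((2 * π) ^ d *
      LinearMap.det ((V : EuclideanSpace ℝ (Fin d) →L[ℝ] EuclideanSpace ℝ (Fin d)) :
        EuclideanSpace ℝ (Fin d) →ₗ[ℝ] EuclideanSpace ℝ (Fin d))))⁻¹ *
    Real.exp (-(1 / 2) * ⟪x - μ, V.symm (x - μ)⟫)

/-- The exponential character `x ↦ exp ⟪x, v⟫` as a monoid hom from `Multiplicative ℝ^d` to `ℝ`. -/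
noncomputable def expChar {d : ℕ} (v : EuclideanSpace ℝ (Fin d)) :
    Multiplicative (EuclideanSpace ℝ (Fin d)) →* ℝ where
  toFun x := Real.exp ⟪Multiplicative.toAdd x, v⟫
  map_one' := by
    simp [inner_zero_left]
  map_mul' x y := by
    simp [inner_add_left, Real.exp_add]

lemma expChar_injective {d : ℕ} : Function.Injective (expChar (d := d)) := by
  intro v w h
  have h1 := DFunLike.congr_fun h (Multiplicative.ofAdd (v - w))
  simp only [expChar, MonoidHom.coe_mk, OneHom.coe_mk, toAdd_ofAdd] at h1
  rw [Real.exp_eq_exp] at h1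
  have h2 : ⟪v - w, v - w⟫ = 0 := by
    rw [inner_sub_right, h1, sub_self]
  have := inner_self_eq_zero (𝕜 := ℝ).mp h2
  exact sub_eq_zero.mp this

lemma det_pos_of_posdef {d : ℕ}
    (V : EuclideanSpace ℝ (Fin d) ≃L[ℝ] EuclideanSpace ℝ (Fin d))
    (hsymm : ∀ x y : EuclideanSpace ℝ (Fin d), ⟪V x, y⟫ = ⟪x, V y⟫)
    (hposdef : ∀ x : EuclideanSpace ℝ (Fin d), x ≠ 0 → 0 < ⟪x, V x⟫) :
    0 < LinearMap.det ((V : EuclideanSpace ℝ (Fin d) →L[ℝ] EuclideanSpace ℝ (Fin d)) :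
        EuclideanSpace ℝ (Fin d) →ₗ[ℝ] EuclideanSpace ℝ (Fin d)) := by
  classical
  set b := (EuclideanSpace.basisFun (Fin d) ℝ).toBasis with hb
  set L := ((V : EuclideanSpace ℝ (Fin d) →L[ℝ] EuclideanSpace ℝ (Fin d)) :
      EuclideanSpace ℝ (Fin d) →ₗ[ℝ] EuclideanSpace ℝ (Fin d)) with hL
  have hLapp : ∀ x, L x = V x := fun x => rfl
  set A := LinearMap.toMatrix b b L with hA
  have hrepr : ∀ (y : EuclideanSpace ℝ (Fin d)), ⇑(b.repr y) = fun i => y i := by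
    intro y
    funext i
    rw [hb, OrthonormalBasis.coe_toBasis_repr_apply, EuclideanSpace.basisFun_repr]
  have hmul : ∀ (x : Fin d → ℝ),
      A.mulVec x = fun i => (V ((WithLp.equiv 2 (Fin d → ℝ)).symm x)) i := by
    intro x
    have hx : ⇑(b.repr ((WithLp.equiv 2 (Fin d → ℝ)).symm x)) = x := by
      rw [hrepr]; rfl
    have := LinearMap.toMatrix_mulVec_repr b b L ((WithLp.equiv 2 (Fin d → ℝ)).symm x)
    rw [hx] at this
    rw [← hA] at this
    rw [this, hrepr, hLapp]
  have hAentry : ∀ i j, A i j = (V (EuclideanSpace.single j 1)) i := by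
    intro i j
    rw [hA, LinearMap.toMatrix_apply, hrepr, hLapp, hb, OrthonormalBasis.coe_toBasis,
      EuclideanSpace.basisFun_apply]
  have hinner : ∀ (i : Fin d) (y : EuclideanSpace ℝ (Fin d)),
      ⟪EuclideanSpace.single i (1:ℝ), y⟫ = y i := by
    intro i y
    rw [EuclideanSpace.inner_single_left]
    simp
  have hposA : A.PosDef := by
    rw [Matrix.posDef_iff_dotProduct_mulVec]
    constructor
    · rw [Matrix.IsHermitian]
      ext i j
      rw [Matrix.conjTranspose_apply]
      simp only [star_trivial]
      rw [hAentry, hAentry]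
      calc (V (EuclideanSpace.single i 1)) j
          = ⟪EuclideanSpace.single j (1:ℝ), V (EuclideanSpace.single i 1)⟫ := (hinner _ _).symm
        _ = ⟪V (EuclideanSpace.single j 1), EuclideanSpace.single i 1⟫ := (hsymm _ _).symm
        _ = ⟪EuclideanSpace.single i (1:ℝ), V (EuclideanSpace.single j 1)⟫ := real_inner_comm _ _
        _ = (V (EuclideanSpace.single j 1)) i := hinner _ _
    · intro x hx
      have hy : (WithLp.equiv 2 (Fin d → ℝ)).symm x ≠ 0 := by
        intro h0
        apply hx
        have := congrArg (WithLp.equiv 2 (Fin d → ℝ)) h0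
        simpa using this
      have hpos := hposdef _ hy
      rw [PiLp.inner_apply] at hpos
      simp only [star_trivial]
      rw [hmul]
      rw [dotProduct]
      simp only [RCLike.inner_apply, starRingEnd_apply, star_trivial] at hpos
      exact hpos.trans_eq (Finset.sum_congr rfl fun i _ => mul_comm _ _)
  have hdet := hposA.det_pos
  rwa [hA, LinearMap.det_toMatrix] at hdet

lemma gauss_indep {d : ℕ}
    (V : EuclideanSpace ℝ (Fin d) ≃L[ℝ] EuclideanSpace ℝ (Fin d))
    (hsymm : ∀ x y : EuclideanSpace ℝ (Fin d), ⟪V x, y⟫ = ⟪x, V y⟫)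
    (hposdef : ∀ x : EuclideanSpace ℝ (Fin d), x ≠ 0 → 0 < ⟪x, V x⟫)
    (T : Finset (EuclideanSpace ℝ (Fin d))) (c : EuclideanSpace ℝ (Fin d) → ℝ)
    (h : ∀ x, ∑ θ ∈ T, c θ * gaussDensity V θ x = 0) :
    ∀ θ ∈ T, c θ = 0 := by
  classical
  set K : ℝ := (Real.sqrt ((2 * π) ^ d *
      LinearMap.det ((V : EuclideanSpace ℝ (Fin d) →L[ℝ] EuclideanSpace ℝ (Fin d)) :
        EuclideanSpace ℝ (Fin d) →ₗ[ℝ] EuclideanSpace ℝ (Fin d))))⁻¹ with hK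
  have hKpos : 0 < K := by
    rw [hK]
    apply inv_pos.mpr
    apply Real.sqrt_pos.mpr
    have := det_pos_of_posdef V hsymm hposdef
    positivity
  set W := V.symm with hW
  have hWsymm : ∀ x y : EuclideanSpace ℝ (Fin d), ⟪x, W y⟫ = ⟪W x, y⟫ := by
    intro x y
    have h := hsymm (V.symm x) (V.symm y)
    rw [V.apply_symm_apply, V.apply_symm_apply] at h
    exact h
  -- expansion of the density
  have hexp : ∀ θ x : EuclideanSpace ℝ (Fin d), gaussDensity V θ x =
      K * Real.exp (-(1/2) * ⟪x, W x⟫) *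
        (Real.exp (-(1/2) * ⟪θ, W θ⟫) * Real.exp ⟪x, W θ⟫) := by
    intro θ x
    rw [gaussDensity, ← hK, ← hW]
    have hq : ⟪x - θ, W (x - θ)⟫ = ⟪x, W x⟫ - 2 * ⟪x, W θ⟫ + ⟪θ, W θ⟫ := by
      simp only [map_sub, inner_sub_left, inner_sub_right]
      have : ⟪θ, W x⟫ = ⟪x, W θ⟫ := by
        rw [hWsymm θ x, real_inner_comm]
      rw [this]
      ring
    rw [hq]
    rw [mul_assoc, ← Real.exp_add, ← Real.exp_add]
    congr 1
    ring
  -- linear independence of characters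
  have li : LinearIndependent ℝ
      ((fun φ : Multiplicative (EuclideanSpace ℝ (Fin d)) →* ℝ => ⇑φ) ∘
        (fun θ : EuclideanSpace ℝ (Fin d) => expChar (W θ))) := by
    apply (linearIndependent_monoidHom (Multiplicative (EuclideanSpace ℝ (Fin d))) ℝ).comp
    intro a b hab
    exact W.injective (expChar_injective hab)
  have key := linearIndependent_iff'.mp li T
    (fun θ => c θ * Real.exp (-(1/2) * ⟪θ, W θ⟫))
  have hsum : ∑ θ ∈ T, (c θ * Real.exp (-(1/2) * ⟪θ, W θ⟫)) •
      ((fun φ : Multiplicative (EuclideanSpace ℝ (Fin d)) →* ℝ => ⇑φ) ∘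
        (fun θ : EuclideanSpace ℝ (Fin d) => expChar (W θ))) θ = 0 := by
    funext z
    rw [Finset.sum_apply]
    simp only [Pi.zero_apply, Function.comp_apply, Pi.smul_apply, smul_eq_mul]
    have hz := h (Multiplicative.toAdd z)
    have h2 : ∑ θ ∈ T, c θ * gaussDensity V θ (Multiplicative.toAdd z) =
        (K * Real.exp (-(1/2) * ⟪Multiplicative.toAdd z, W (Multiplicative.toAdd z)⟫)) *
        ∑ θ ∈ T, c θ * Real.exp (-(1/2) * ⟪θ, W θ⟫) *
          Real.exp ⟪Multiplicative.toAdd z, W θ⟫ := by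
      rw [Finset.mul_sum]
      apply Finset.sum_congr rfl
      intro θ _
      rw [hexp θ]
      ring
    rw [h2] at hz
    have hne : (K * Real.exp (-(1/2) * ⟪Multiplicative.toAdd z, W (Multiplicative.toAdd z)⟫)) ≠ 0 := by
      positivity
    have h3 : ∑ θ ∈ T, c θ * Real.exp (-(1/2) * ⟪θ, W θ⟫) *
        Real.exp ⟪Multiplicative.toAdd z, W θ⟫ = 0 := by
      rcases mul_eq_zero.mp hz with h' | h'
      · exact absurd h' hne
      · exact h'
    rw [← h3]
    apply Finset.sum_congr rfl
    intro θ _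
    rw [expChar]
    simp only [MonoidHom.coe_mk, OneHom.coe_mk]
  intro θ hθ
  have := key hsum θ hθ
  have hexppos : Real.exp (-(1/2) * ⟪θ, W θ⟫) ≠ 0 := Real.exp_ne_zero _
  rcases mul_eq_zero.mp this with h' | h'
  · exact h'
  · exact absurd h' hexppos

/-- If `M_∞, M_1 ⊂ ℝ^d` are disjoint convex sets and `V` is a symmetric positive-definite
covariance, then the convex hulls of the Gaussian density families
`{N(θ, V) : θ ∈ M_∞}` and `{N(θ, V) : θ ∈ M_1}` are disjoint. -/
theorem gaussian_hulls_disjoint {d : ℕ}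
    (V : EuclideanSpace ℝ (Fin d) ≃L[ℝ] EuclideanSpace ℝ (Fin d))
    (hsymm : ∀ x y : EuclideanSpace ℝ (Fin d), ⟪V x, y⟫ = ⟪x, V y⟫)
    (hposdef : ∀ x : EuclideanSpace ℝ (Fin d), x ≠ 0 → 0 < ⟪x, V x⟫)
    (Minf M1 : Set (EuclideanSpace ℝ (Fin d)))
    (hdisj : Disjoint Minf M1) (hconvinf : Convex ℝ Minf) (hconv1 : Convex ℝ M1) :
    Disjoint (convexHull ℝ ((fun θ => gaussDensity V θ) '' Minf))
      (convexHull ℝ ((fun θ => gaussDensity V θ) '' M1)) := by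
  classical
  rw [Set.disjoint_left]
  intro f hfinf hf1
  rw [convexHull_eq] at hfinf hf1
  obtain ⟨ι, s, w, z, hw0, hw1, hz, hcm⟩ := hfinf
  obtain ⟨ι', s', w', z', hw0', hw1', hz', hcm'⟩ := hf1
  rw [Finset.centerMass_eq_of_sum_1 _ _ hw1] at hcm
  rw [Finset.centerMass_eq_of_sum_1 _ _ hw1'] at hcm'
  choose! θ hθmem hθeq using fun i (hi : i ∈ s) => hz i hi
  choose! η hηmem hηeq using fun j (hj : j ∈ s') => hz' j hj
  set T : Finset (EuclideanSpace ℝ (Fin d)) := s.image θ ∪ s'.image η with hT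
  set c : EuclideanSpace ℝ (Fin d) → ℝ := fun μ =>
    (∑ i ∈ s.filter (fun i => θ i = μ), w i) - (∑ j ∈ s'.filter (fun j => η j = μ), w' j) with hc
  have hmaps : ∀ i ∈ s, θ i ∈ T := fun i hi =>
    Finset.mem_union_left _ (Finset.mem_image_of_mem θ hi)
  have hmaps' : ∀ j ∈ s', η j ∈ T := fun j hj =>
    Finset.mem_union_right _ (Finset.mem_image_of_mem η hj)
  have hzero : ∀ x, ∑ μ ∈ T, c μ * gaussDensity V μ x = 0 := by
    intro x
    have hA : ∑ μ ∈ T, (∑ i ∈ s.filter (fun i => θ i = μ), w i) * gaussDensity V μ x =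
        ∑ i ∈ s, w i * gaussDensity V (θ i) x := by
      rw [← Finset.sum_fiberwise_of_maps_to hmaps (fun i => w i * gaussDensity V (θ i) x)]
      apply Finset.sum_congr rfl
      intro μ _
      rw [Finset.sum_mul]
      apply Finset.sum_congr rfl
      intro i hi
      rw [(Finset.mem_filter.mp hi).2]
    have hB : ∑ μ ∈ T, (∑ j ∈ s'.filter (fun j => η j = μ), w' j) * gaussDensity V μ x =
        ∑ j ∈ s', w' j * gaussDensity V (η j) x := by
      rw [← Finset.sum_fiberwise_of_maps_to hmaps' (fun j => w' j * gaussDensity V (η j) x)]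
      apply Finset.sum_congr rfl
      intro μ _
      rw [Finset.sum_mul]
      apply Finset.sum_congr rfl
      intro j hj
      rw [(Finset.mem_filter.mp hj).2]
    have hsub : ∑ μ ∈ T, c μ * gaussDensity V μ x =
        (∑ μ ∈ T, (∑ i ∈ s.filter (fun i => θ i = μ), w i) * gaussDensity V μ x) -
        (∑ μ ∈ T, (∑ j ∈ s'.filter (fun j => η j = μ), w' j) * gaussDensity V μ x) := by
      rw [← Finset.sum_sub_distrib]
      apply Finset.sum_congr rfl
      intro μ _
      rw [hc]
      ring
    rw [hsub, hA, hB]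
    have hfx : ∀ i ∈ s, w i * gaussDensity V (θ i) x = w i * z i x := by
      intro i hi
      have h' : gaussDensity V (θ i) = z i := hθeq i hi
      rw [h']
    have hfx' : ∀ j ∈ s', w' j * gaussDensity V (η j) x = w' j * z' j x := by
      intro j hj
      have h' : gaussDensity V (η j) = z' j := hηeq j hj
      rw [h']
    rw [Finset.sum_congr rfl hfx, Finset.sum_congr rfl hfx']
    have h1 : ∑ i ∈ s, w i * z i x = f x := by
      rw [← hcm]
      rw [Finset.sum_apply]
      rfl
    have h2 : ∑ j ∈ s', w' j * z' j x = f x := by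
      rw [← hcm']
      rw [Finset.sum_apply]
      rfl
    rw [h1, h2, sub_self]
  have hc0 := gauss_indep V hsymm hposdef T c hzero
  -- now derive contradiction
  have hBzero : ∀ μ ∈ s.image θ, ∑ j ∈ s'.filter (fun j => η j = μ), w' j = 0 := by
    intro μ hμ
    obtain ⟨i, hi, rfl⟩ := Finset.mem_image.mp hμ
    apply Finset.sum_eq_zero
    intro j hj
    exfalso
    have hjmem := Finset.mem_filter.mp hj
    have : η j ∈ M1 := hηmem j hjmem.1
    rw [hjmem.2] at this
    exact Set.disjoint_left.mp hdisj (hθmem i hi) this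
  have hAzero : ∀ μ ∈ s.image θ, ∑ i ∈ s.filter (fun i => θ i = μ), w i = 0 := by
    intro μ hμ
    have hμT : μ ∈ T := Finset.mem_union_left _ hμ
    have hceq : (∑ i ∈ s.filter (fun i => θ i = μ), w i) -
        (∑ j ∈ s'.filter (fun j => η j = μ), w' j) = 0 := hc0 μ hμT
    have hB := hBzero μ hμ
    linarith [hceq, hB]
  have : (1 : ℝ) = 0 := by
    rw [← hw1]
    rw [← Finset.sum_fiberwise_of_maps_to (fun i hi => Finset.mem_image_of_mem θ hi) w]
    exact Finset.sum_eq_zero hAzero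
  norm_num at this
end

section
/- (Lower bound on ARL via renewal decomposition) Let Z_1, Z_2,... be i.i.d. with E[exp(Z_1)] ≤ 1, and define the CUSUM stopping time T = inf{n ≥ 1 : max_{1≤k≤n} Σ_{i=k}^n Z_i ≥ ω'} for ω' > 0. Then E[T] ≥ e^{ω'}. -/
open MeasureTheory ProbabilityTheory Real
open scoped BigOperators ENNReal

set_option linter.unusedSectionVars false

namespace CusumAux

variable {Ω : Type*} [MeasurableSpace Ω]

/-- crossing event at time `n` -/
def cA (Z : ℕ → Ω → ℝ) (w : ℝ) (n : ℕ) : Set Ω :=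
  ⋃ k ∈ Finset.Icc 1 n, {ω | w ≤ ∑ i ∈ Finset.Icc k n, Z i ω}

/-- no crossing up to time `n` -/
def cB (Z : ℕ → Ω → ℝ) (w : ℝ) (n : ℕ) : Set Ω :=
  ⋂ m ∈ Finset.Icc 1 n, (cA Z w m)ᶜ

/-- Shiryaev–Roberts statistic -/
noncomputable def cR (Z : ℕ → Ω → ℝ) (n : ℕ) (ω : Ω) : ℝ≥0∞ :=
  ∑ k ∈ Finset.Icc 1 n, ENNReal.ofReal (Real.exp (∑ i ∈ Finset.Icc k n, Z i ω))

lemma mem_cA {Z : ℕ → Ω → ℝ} {w : ℝ} {n : ℕ} {ω : Ω} :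
    ω ∈ cA Z w n ↔ ∃ k, 1 ≤ k ∧ k ≤ n ∧ w ≤ ∑ i ∈ Finset.Icc k n, Z i ω := by
  simp [cA, Finset.mem_Icc, and_assoc]

lemma mem_cB {Z : ℕ → Ω → ℝ} {w : ℝ} {n : ℕ} {ω : Ω} :
    ω ∈ cB Z w n ↔ ∀ m, 1 ≤ m → m ≤ n → ω ∉ cA Z w m := by
  simp [cB, Finset.mem_Icc, and_imp]

lemma measurableSet_cA {Z : ℕ → Ω → ℝ} (hmeas : ∀ i, Measurable (Z i)) (w : ℝ) (n : ℕ) :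
    MeasurableSet (cA Z w n) := by
  refine MeasurableSet.biUnion (Finset.Icc 1 n).countable_toSet fun k _ => ?_
  exact measurableSet_le measurable_const (by exact Finset.measurable_sum _ fun i _ => hmeas i)

lemma measurableSet_cB {Z : ℕ → Ω → ℝ} (hmeas : ∀ i, Measurable (Z i)) (w : ℝ) (n : ℕ) :
    MeasurableSet (cB Z w n) :=
  MeasurableSet.biInter (Finset.Icc 1 n).countable_toSet
    fun m _ => (measurableSet_cA hmeas w m).compl

lemma measurable_cR {Z : ℕ → Ω → ℝ} (hmeas : ∀ i, Measurable (Z i)) (n : ℕ) :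
    Measurable (cR Z n) := by
  refine Finset.measurable_sum _ fun k _ => ?_
  exact ENNReal.measurable_ofReal.comp (Real.measurable_exp.comp
    (Finset.measurable_sum _ fun i _ => hmeas i))

lemma cB_antitone {Z : ℕ → Ω → ℝ} {w : ℝ} : Antitone (cB Z w) := by
  intro a b hab ω hω
  rw [mem_cB] at hω ⊢
  exact fun m h1 h2 => hω m h1 (h2.trans hab)

lemma cB_succ {Z : ℕ → Ω → ℝ} {w : ℝ} {n : ℕ} {ω : Ω} :
    ω ∈ cB Z w (n + 1) ↔ ω ∈ cB Z w n ∧ ω ∉ cA Z w (n + 1) := by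
  simp only [mem_cB]
  constructor
  · intro h
    exact ⟨fun m h1 h2 => h m h1 (h2.trans (Nat.le_succ n)),
      h (n + 1) (Nat.succ_le_succ (Nat.zero_le n)) le_rfl⟩
  · rintro ⟨h, h'⟩ m h1 h2
    rcases Nat.lt_or_ge m (n + 1) with hm | hm
    · exact h m h1 (Nat.lt_succ_iff.mp hm)
    · have : m = n + 1 := le_antisymm h2 hm
      subst this; exact h'

/-- recurrence for the Shiryaev–Roberts statistic -/
lemma cR_succ (Z : ℕ → Ω → ℝ) (n : ℕ) (ω : Ω) :
    cR Z (n + 1) ω = (cR Z n ω + 1) * ENNReal.ofReal (Real.exp (Z (n + 1) ω)) := by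
  have hsum : ∀ k, k ≤ n + 1 →
      ∑ i ∈ Finset.Icc k (n + 1), Z i ω = (∑ i ∈ Finset.Icc k n, Z i ω) + Z (n + 1) ω :=
    fun k hk => Finset.sum_Icc_succ_top hk _
  rw [cR, Finset.sum_Icc_succ_top (by omega : 1 ≤ n + 1)]
  have h1 : ∑ i ∈ Finset.Icc (n + 1) (n + 1), Z i ω = Z (n + 1) ω := by simp
  have h2 : ∀ k ∈ Finset.Icc 1 n,
      ENNReal.ofReal (Real.exp (∑ i ∈ Finset.Icc k (n + 1), Z i ω)) =
      ENNReal.ofReal (Real.exp (∑ i ∈ Finset.Icc k n, Z i ω)) *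
        ENNReal.ofReal (Real.exp (Z (n + 1) ω)) := by
    intro k hk
    rw [hsum k (by simp at hk; omega), Real.exp_add, ENNReal.ofReal_mul (Real.exp_pos _).le]
  rw [Finset.sum_congr rfl h2, ← Finset.sum_mul, h1, cR, add_mul, one_mul]

/-- crossing implies the SR statistic is large -/
lemma cross {Z : ℕ → Ω → ℝ} {w : ℝ} {n : ℕ} {ω : Ω} (h : ω ∈ cA Z w n) :
    ENNReal.ofReal (Real.exp w) ≤ cR Z n ω := by
  rw [mem_cA] at h
  obtain ⟨k, hk1, hkn, hwle⟩ := h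
  calc ENNReal.ofReal (Real.exp w)
      ≤ ENNReal.ofReal (Real.exp (∑ i ∈ Finset.Icc k n, Z i ω)) :=
        ENNReal.ofReal_le_ofReal (Real.exp_le_exp.mpr hwle)
    _ ≤ cR Z n ω := by
        exact Finset.single_le_sum
          (f := fun k => ENNReal.ofReal (Real.exp (∑ i ∈ Finset.Icc k n, Z i ω)))
          (fun i _ => zero_le) (Finset.mem_Icc.mpr ⟨hk1, hkn⟩)

lemma indep_step (μ : Measure Ω) (Z : ℕ → Ω → ℝ) (hmeas : ∀ i, Measurable (Z i))
    (hindep : iIndepFun Z μ) (w : ℝ) (n : ℕ) :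
    IndepFun (fun ω => (cR Z n ω + 1) * (cB Z w n).indicator 1 ω)
      (fun ω => ENNReal.ofReal (Real.exp (Z (n + 1) ω))) μ := by
  classical
  set s : Finset ℕ := Finset.range (n + 1) with hs
  have hd : Disjoint s ({n + 1} : Finset ℕ) := by
    simp [hs, Finset.disjoint_singleton_right]
  have h1 := hindep.indepFun_finset s {n + 1} hd hmeas
  set g : (↥s → ℝ) → ℕ → ℝ := fun v i => if h : i ∈ s then v ⟨i, h⟩ else 0 with hgdef
  have hgmeas : ∀ i, Measurable fun v => g v i := by
    intro i
    by_cases h : i ∈ s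
    · simpa [hgdef, h] using measurable_pi_apply (⟨i, h⟩ : ↥s)
    · simpa [hgdef, h] using measurable_const
  set SB : Set (↥s → ℝ) :=
    ⋂ m ∈ Finset.Icc 1 n, (⋃ k ∈ Finset.Icc 1 m, {v | w ≤ ∑ i ∈ Finset.Icc k m, g v i})ᶜ
    with hSB
  set φ : (↥s → ℝ) → ℝ≥0∞ := fun v =>
    ((∑ k ∈ Finset.Icc 1 n, ENNReal.ofReal (Real.exp (∑ i ∈ Finset.Icc k n, g v i))) + 1) *
      SB.indicator 1 v with hφdef
  set ψ : (↥({n + 1} : Finset ℕ) → ℝ) → ℝ≥0∞ := fun v =>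
    ENNReal.ofReal (Real.exp (v ⟨n + 1, Finset.mem_singleton_self _⟩)) with hψdef
  have hφ : Measurable φ := by
    have hsumm : ∀ k m : ℕ, Measurable fun v => ∑ i ∈ Finset.Icc k m, g v i :=
      fun k m => Finset.measurable_sum _ fun i _ => hgmeas i
    have hSBm : MeasurableSet SB := by
      refine MeasurableSet.biInter (Finset.Icc 1 n).countable_toSet fun m _ => ?_
      refine (MeasurableSet.biUnion (Finset.Icc 1 m).countable_toSet fun k _ => ?_).compl
      exact measurableSet_le measurable_const (hsumm k m)
    refine Measurable.mul ?_ (Measurable.indicator measurable_const hSBm)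
    refine Measurable.add ?_ measurable_const
    exact Finset.measurable_sum _ fun k _ =>
      ENNReal.measurable_ofReal.comp (Real.measurable_exp.comp (hsumm k n))
  have hψ : Measurable ψ := by
    exact ENNReal.measurable_ofReal.comp (Real.measurable_exp.comp (measurable_pi_apply _))
  have h2 := h1.comp hφ hψ
  have heq1 : (φ ∘ fun a (i : ↥s) => Z i a)
      = fun ω => (cR Z n ω + 1) * (cB Z w n).indicator 1 ω := by
    funext ω
    have hg : ∀ i : ℕ, i ≤ n → g (fun j : ↥s => Z j ω) i = Z i ω := by
      intro i hi
      have h : i ∈ s := Finset.mem_range.mpr (Nat.lt_succ_of_le hi)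
      simp [hgdef, h]
    have hsum : ∀ k m : ℕ, m ≤ n →
        ∑ i ∈ Finset.Icc k m, g (fun j : ↥s => Z j ω) i
          = ∑ i ∈ Finset.Icc k m, Z i ω := by
      intro k m hm
      exact Finset.sum_congr rfl fun i hi => hg i ((Finset.mem_Icc.mp hi).2.trans hm)
    have hR : ∑ k ∈ Finset.Icc 1 n,
        ENNReal.ofReal (Real.exp (∑ i ∈ Finset.Icc k n, g (fun j : ↥s => Z j ω) i))
        = cR Z n ω := by
      exact Finset.sum_congr rfl fun k _ => by rw [hsum k n le_rfl]
    have hmem : (fun j : ↥s => Z j ω) ∈ SB ↔ ω ∈ cB Z w n := by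
      simp only [hSB, cB, cA, Set.mem_iInter, Set.mem_compl_iff, Set.mem_iUnion,
        Set.mem_setOf_eq, not_exists]
      constructor
      · intro h m hm k hk
        rw [← hsum k m (Finset.mem_Icc.mp hm).2]
        exact h m hm k hk
      · intro h m hm k hk
        rw [hsum k m (Finset.mem_Icc.mp hm).2]
        exact h m hm k hk
    simp only [Function.comp_apply, hφdef, hR]
    by_cases hb : ω ∈ cB Z w n
    · rw [Set.indicator_of_mem (hmem.mpr hb), Set.indicator_of_mem hb]; simp
    · rw [Set.indicator_of_notMem (fun hc => hb (hmem.mp hc)),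
        Set.indicator_of_notMem hb]
  have heq2 : (ψ ∘ fun a (i : ↥({n + 1} : Finset ℕ)) => Z i a)
      = fun ω => ENNReal.ofReal (Real.exp (Z (n + 1) ω)) := rfl
  rw [heq1, heq2] at h2
  exact h2

end CusumAux

open CusumAux

/-- Lower bound on the average run length of the CUSUM stopping time.  Let
`Z_1, Z_2, ...` be i.i.d. with `E[exp(Z_1)] ≤ 1`, and let
`T = inf {n ≥ 1 : max_{1≤k≤n} Σ_{i=k}^n Z_i ≥ ω'}` for `ω' > 0` (with `inf ∅ = ∞`).
Then `E[T] ≥ e^{ω'}`. -/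
theorem cusum_arl_lower_bound {Ω : Type*} [MeasurableSpace Ω]
    (μ : Measure Ω) [IsProbabilityMeasure μ] (Z : ℕ → Ω → ℝ)
    (hmeas : ∀ i, Measurable (Z i))
    (hindep : iIndepFun Z μ)
    (hident : ∀ i, IdentDistrib (Z i) (Z 0) μ μ)
    (hintexp : Integrable (fun ω => Real.exp (Z 0 ω)) μ)
    (hle : ∫ ω, Real.exp (Z 0 ω) ∂μ ≤ 1)
    (w : ℝ) (hw : 0 < w) :
    ENNReal.ofReal (Real.exp w) ≤
      ∫⁻ ω, sInf {t : ℝ≥0∞ | ∃ n : ℕ, t = n ∧ 1 ≤ n ∧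
        ∃ k : ℕ, 1 ≤ k ∧ k ≤ n ∧ w ≤ ∑ i ∈ Finset.Icc k n, Z i ω} ∂μ := by
  classical
  set T : Ω → ℝ≥0∞ := fun ω => sInf {t : ℝ≥0∞ | ∃ n : ℕ, t = n ∧ 1 ≤ n ∧
      ∃ k : ℕ, 1 ≤ k ∧ k ≤ n ∧ w ≤ ∑ i ∈ Finset.Icc k n, Z i ω} with hT
  have hBm : ∀ n, MeasurableSet (cB Z w n) := measurableSet_cB hmeas w
  have hAm : ∀ n, MeasurableSet (cA Z w n) := measurableSet_cA hmeas w
  have hRm : ∀ n, Measurable (cR Z n) := measurable_cR hmeas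
  -- the exponential moment bound
  have heint : ∀ m : ℕ, ∫⁻ ω, ENNReal.ofReal (Real.exp (Z m ω)) ∂μ ≤ 1 := by
    intro m
    have hident' : IdentDistrib (fun ω => ENNReal.ofReal (Real.exp (Z m ω)))
        (fun ω => ENNReal.ofReal (Real.exp (Z 0 ω))) μ μ :=
      (hident m).comp (ENNReal.measurable_ofReal.comp Real.measurable_exp)
    rw [hident'.lintegral_eq,
      ← MeasureTheory.ofReal_integral_eq_lintegral_ofReal hintexp
        (Filter.Eventually.of_forall fun ω => (Real.exp_pos _).le)]
    calc ENNReal.ofReal (∫ ω, Real.exp (Z 0 ω) ∂μ) ≤ ENNReal.ofReal 1 :=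
          ENNReal.ofReal_le_ofReal hle
      _ = 1 := ENNReal.ofReal_one
  -- lower bound on T on the event of no crossing up to time n
  have hTge : ∀ n (ω : Ω), ω ∈ cB Z w n → ((n : ℝ≥0∞) + 1) ≤ T ω := by
    intro n ω hω
    refine le_sInf ?_
    rintro t ⟨m, rfl, hm1, k, hk1, hkm, hwle⟩
    have hA : ω ∈ cA Z w m := mem_cA.mpr ⟨k, hk1, hkm, hwle⟩
    have hnm : ¬ m ≤ n := fun h => (mem_cB.mp hω) m hm1 h hA
    have h1 : n + 1 ≤ m := by omega
    calc (n : ℝ≥0∞) + 1 = ((n + 1 : ℕ) : ℝ≥0∞) := by push_cast; ring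
      _ ≤ (m : ℝ≥0∞) := by exact_mod_cast h1
  -- pointwise bound : sum of indicators of the B n is at most T
  have hsumT : ∀ N (ω : Ω),
      (∑ n ∈ Finset.range N, (cB Z w n).indicator (1 : Ω → ℝ≥0∞) ω) ≤ T ω := by
    intro N ω
    induction N with
    | zero => simp
    | succ N ih =>
      by_cases hmem : ω ∈ cB Z w N
      · have hall : ∀ n ∈ Finset.range (N + 1), (cB Z w n).indicator (1 : Ω → ℝ≥0∞) ω = 1 := by
          intro n hn
          have hmn : ω ∈ cB Z w n :=
            cB_antitone (Nat.lt_succ_iff.mp (Finset.mem_range.mp hn)) hmem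
          simp [Set.indicator_of_mem hmn]
        rw [Finset.sum_congr rfl hall, Finset.sum_const, Finset.card_range, nsmul_eq_mul,
          mul_one]
        have := hTge N ω hmem
        calc ((N + 1 : ℕ) : ℝ≥0∞) = (N : ℝ≥0∞) + 1 := by push_cast; ring
          _ ≤ T ω := this
      · rw [Finset.sum_range_succ, Set.indicator_of_notMem hmem, add_zero]
        exact ih
  -- the running cost
  set aN : ℕ → ℝ≥0∞ := fun n => ∫⁻ ω, cR Z n ω * (cB Z w n).indicator 1 ω ∂μ with haN
  -- the key supermartingale-type step
  have hkey : ∀ n, ENNReal.ofReal (Real.exp w) * μ (cB Z w n ∩ cA Z w (n + 1)) + aN (n + 1)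
      ≤ aN n + μ (cB Z w n) := by
    intro n
    have hDm : MeasurableSet (cB Z w n ∩ cA Z w (n + 1)) := (hBm n).inter (hAm (n + 1))
    have hindsum : ∀ ω : Ω, (cB Z w n ∩ cA Z w (n + 1)).indicator (1 : Ω → ℝ≥0∞) ω
        + (cB Z w (n + 1)).indicator 1 ω = (cB Z w n).indicator 1 ω := by
      intro ω
      by_cases h1 : ω ∈ cB Z w n
      · by_cases h2 : ω ∈ cA Z w (n + 1)
        · rw [Set.indicator_of_mem (Set.mem_inter h1 h2),
            Set.indicator_of_notMem (fun hc => (cB_succ.mp hc).2 h2),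
            Set.indicator_of_mem h1]
          simp
        · rw [Set.indicator_of_notMem (fun hc => h2 hc.2),
            Set.indicator_of_mem (cB_succ.mpr ⟨h1, h2⟩), Set.indicator_of_mem h1]
          simp
      · rw [Set.indicator_of_notMem (fun hc => h1 hc.1),
          Set.indicator_of_notMem (fun hc => h1 (cB_succ.mp hc).1),
          Set.indicator_of_notMem h1]
        simp
    have step1 : ENNReal.ofReal (Real.exp w) * μ (cB Z w n ∩ cA Z w (n + 1))
        ≤ ∫⁻ ω, cR Z (n + 1) ω * (cB Z w n ∩ cA Z w (n + 1)).indicator 1 ω ∂μ := by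
      rw [← MeasureTheory.lintegral_indicator_const hDm (ENNReal.ofReal (Real.exp w))]
      refine lintegral_mono fun ω => ?_
      by_cases h : ω ∈ cB Z w n ∩ cA Z w (n + 1)
      · rw [Set.indicator_of_mem h, Set.indicator_of_mem h]
        simpa using cross h.2
      · simp [Set.indicator_of_notMem h]
    calc ENNReal.ofReal (Real.exp w) * μ (cB Z w n ∩ cA Z w (n + 1)) + aN (n + 1)
        ≤ (∫⁻ ω, cR Z (n + 1) ω * (cB Z w n ∩ cA Z w (n + 1)).indicator 1 ω ∂μ)
          + ∫⁻ ω, cR Z (n + 1) ω * (cB Z w (n + 1)).indicator 1 ω ∂μ :=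
          add_le_add step1 le_rfl
      _ = ∫⁻ ω, (cR Z (n + 1) ω * (cB Z w n ∩ cA Z w (n + 1)).indicator 1 ω
          + cR Z (n + 1) ω * (cB Z w (n + 1)).indicator 1 ω) ∂μ :=
          (lintegral_add_left ((hRm (n + 1)).mul (measurable_one.indicator hDm)) _).symm
      _ = ∫⁻ ω, cR Z (n + 1) ω * (cB Z w n).indicator 1 ω ∂μ := by
          refine lintegral_congr fun ω => ?_
          rw [← mul_add, hindsum ω]
      _ = ∫⁻ ω, ((cR Z n ω + 1) * (cB Z w n).indicator 1 ω)
            * ENNReal.ofReal (Real.exp (Z (n + 1) ω)) ∂μ := by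
          refine lintegral_congr fun ω => ?_
          rw [cR_succ]; ring
      _ = (∫⁻ ω, (cR Z n ω + 1) * (cB Z w n).indicator 1 ω ∂μ)
            * ∫⁻ ω, ENNReal.ofReal (Real.exp (Z (n + 1) ω)) ∂μ :=
          lintegral_mul_eq_lintegral_mul_lintegral_of_indepFun''
            (((hRm n).add measurable_const).mul
              (measurable_one.indicator (hBm n))).aemeasurable
            (ENNReal.measurable_ofReal.comp
              (Real.measurable_exp.comp (hmeas (n + 1)))).aemeasurable
            (indep_step μ Z hmeas hindep w n)
      _ ≤ (∫⁻ ω, (cR Z n ω + 1) * (cB Z w n).indicator 1 ω ∂μ) * 1 :=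
          mul_le_mul_right (heint (n + 1)) _
      _ = ∫⁻ ω, (cR Z n ω * (cB Z w n).indicator 1 ω + (cB Z w n).indicator 1 ω) ∂μ := by
          rw [mul_one]
          refine lintegral_congr fun ω => ?_
          ring
      _ = aN n + μ (cB Z w n) := by
          rw [lintegral_add_left (f := fun ω => cR Z n ω * (cB Z w n).indicator 1 ω)
              ((hRm n).mul (measurable_one.indicator (hBm n))),
            MeasureTheory.lintegral_indicator_one (hBm n)]
  -- telescoping
  have htel : ∀ N, ENNReal.ofReal (Real.exp w)
        * (∑ n ∈ Finset.range N, μ (cB Z w n ∩ cA Z w (n + 1))) + aN N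
      ≤ ∑ n ∈ Finset.range N, μ (cB Z w n) := by
    intro N
    induction N with
    | zero =>
      have : aN 0 = 0 := by simp [haN, cR]
      simp [this]
    | succ N ih =>
      rw [Finset.sum_range_succ, Finset.sum_range_succ, mul_add]
      calc ENNReal.ofReal (Real.exp w) * (∑ n ∈ Finset.range N, μ (cB Z w n ∩ cA Z w (n + 1)))
            + ENNReal.ofReal (Real.exp w) * μ (cB Z w N ∩ cA Z w (N + 1)) + aN (N + 1)
          = ENNReal.ofReal (Real.exp w) * (∑ n ∈ Finset.range N, μ (cB Z w n ∩ cA Z w (n + 1)))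
            + (ENNReal.ofReal (Real.exp w) * μ (cB Z w N ∩ cA Z w (N + 1)) + aN (N + 1)) := by
            ring
        _ ≤ ENNReal.ofReal (Real.exp w) * (∑ n ∈ Finset.range N, μ (cB Z w n ∩ cA Z w (n + 1)))
            + (aN N + μ (cB Z w N)) := add_le_add le_rfl (hkey N)
        _ = (ENNReal.ofReal (Real.exp w)
            * (∑ n ∈ Finset.range N, μ (cB Z w n ∩ cA Z w (n + 1))) + aN N) + μ (cB Z w N) := by
            ring
        _ ≤ (∑ n ∈ Finset.range N, μ (cB Z w n)) + μ (cB Z w N) := add_le_add ih le_rfl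
  -- the complement of B N is covered by the D n
  have hBcompl : ∀ N, (cB Z w N)ᶜ ⊆ ⋃ n ∈ Finset.range N, (cB Z w n ∩ cA Z w (n + 1)) := by
    intro N ω hω
    simp only [Set.mem_compl_iff, mem_cB, not_forall, not_not] at hω
    obtain ⟨m, hm1, hmN, hA⟩ := hω
    have hex : ∃ j, ω ∈ cA Z w (j + 1) := ⟨m - 1, by rwa [Nat.sub_add_cancel hm1]⟩
    have hj : ω ∈ cA Z w (Nat.find hex + 1) := Nat.find_spec hex
    have hjm : Nat.find hex ≤ m - 1 := Nat.find_le (by rwa [Nat.sub_add_cancel hm1])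
    have hjN : Nat.find hex < N := by omega
    have hBj : ω ∈ cB Z w (Nat.find hex) := by
      rw [mem_cB]
      intro m' h1 h2 hA'
      exact Nat.find_min hex (by omega : m' - 1 < Nat.find hex)
        (by rwa [Nat.sub_add_cancel h1])
    exact Set.mem_biUnion (Finset.mem_range.mpr hjN) ⟨hBj, hj⟩
  -- main estimate : for each N
  have hmain : ∀ N, ENNReal.ofReal (Real.exp w) * μ ((cB Z w N)ᶜ) ≤ ∫⁻ ω, T ω ∂μ := by
    intro N
    have h1 : μ ((cB Z w N)ᶜ) ≤ ∑ n ∈ Finset.range N, μ (cB Z w n ∩ cA Z w (n + 1)) :=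
      (measure_mono (hBcompl N)).trans (measure_biUnion_finset_le _ _)
    have h2 : ENNReal.ofReal (Real.exp w)
        * (∑ n ∈ Finset.range N, μ (cB Z w n ∩ cA Z w (n + 1)))
        ≤ ∑ n ∈ Finset.range N, μ (cB Z w n) :=
      le_trans (le_add_right le_rfl) (htel N)
    have h3 : (∑ n ∈ Finset.range N, μ (cB Z w n)) ≤ ∫⁻ ω, T ω ∂μ := by
      have : (∑ n ∈ Finset.range N, μ (cB Z w n))
          = ∫⁻ ω, ∑ n ∈ Finset.range N, (cB Z w n).indicator (1 : Ω → ℝ≥0∞) ω ∂μ := by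
        rw [lintegral_finset_sum _ fun n _ => measurable_one.indicator (hBm n)]
        exact Finset.sum_congr rfl fun n _ =>
          (MeasureTheory.lintegral_indicator_one (hBm n)).symm
      rw [this]
      exact lintegral_mono fun ω => hsumT N ω
    exact le_trans (mul_le_mul_right h1 _) (le_trans h2 h3)
  -- conclude
  by_cases hC : μ (⋂ n, cB Z w n) = 0
  · have hmono : Monotone fun N => (cB Z w N)ᶜ :=
      fun a b hab => Set.compl_subset_compl.mpr (cB_antitone hab)
    have htend := tendsto_measure_iUnion_atTop (μ := μ) hmono
    have hU : ⋃ N, (cB Z w N)ᶜ = (⋂ N, cB Z w N)ᶜ := (Set.compl_iInter _).symm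
    rw [hU] at htend
    have hval : μ ((⋂ N, cB Z w N)ᶜ) = 1 := by
      rw [measure_compl (MeasurableSet.iInter fun n => hBm n) (measure_ne_top μ _), hC]
      simp
    rw [hval] at htend
    have htend2 := ENNReal.Tendsto.const_mul (a := ENNReal.ofReal (Real.exp w)) htend
      (Or.inr ENNReal.ofReal_ne_top)
    rw [mul_one] at htend2
    exact le_of_tendsto htend2 (Filter.Eventually.of_forall fun N => hmain N)
  · have hTtop : ∀ ω ∈ ⋂ n, cB Z w n, T ω = ⊤ := by
      intro ω hω
      have hempty : {t : ℝ≥0∞ | ∃ n : ℕ, t = n ∧ 1 ≤ n ∧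
          ∃ k : ℕ, 1 ≤ k ∧ k ≤ n ∧ w ≤ ∑ i ∈ Finset.Icc k n, Z i ω} = ∅ := by
        rw [Set.eq_empty_iff_forall_notMem]
        rintro t ⟨m, rfl, hm1, k, hk1, hkm, hwle⟩
        have hA : ω ∈ cA Z w m := mem_cA.mpr ⟨k, hk1, hkm, hwle⟩
        exact (mem_cB.mp (Set.mem_iInter.mp hω m)) m hm1 le_rfl hA
      simp only [hT]
      rw [hempty]
      exact _root_.sInf_empty
    have hinf : ∫⁻ ω, T ω ∂μ = ⊤ := by
      have hle' : ∫⁻ ω, (⋂ n, cB Z w n).indicator (fun _ => (⊤ : ℝ≥0∞)) ω ∂μ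
          ≤ ∫⁻ ω, T ω ∂μ := by
        refine lintegral_mono fun ω => ?_
        by_cases h : ω ∈ ⋂ n, cB Z w n
        · rw [Set.indicator_of_mem h, hTtop ω h]
        · simp [Set.indicator_of_notMem h]
      rw [lintegral_indicator_const (MeasurableSet.iInter fun n => hBm n)] at hle'
      rw [ENNReal.top_mul hC] at hle'
      exact top_le_iff.mp hle'
    rw [hinf]
    exact le_top
end
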